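/- Let z > 1 be real, set ω = z − √(z² − 1), and let T_n denote the Chebyshev polynomial of the first kind of degree n. Then for all n, m ∈ ℕ, ∫_{−1}^{1} T_n(λ)·T_m(λ)/((λ − z)·√(1 − λ²)) dλ = −π·(ω^{n+m} + ω^{|n−m|})/(2√(z² − 1)). In particular, for n = m = 0 the integral equals −π/√(z² − 1). -/

import Mathlib

open Real MeasureTheory intervalIntegral Set Polynomial.Chebyshev


lemma meas_aux : Measurable fun x : ℝ => (Real.sqrt (1 - x ^ 2))⁻¹ :=
  (Real.continuous_sqrt.comp (by continuity)).measurable.inv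

lemma int_sqrt_inv : IntervalIntegrable (fun x : ℝ => (Real.sqrt (1 - x ^ 2))⁻¹)
    volume (-1) 1 := by
  have h01 : IntervalIntegrable (fun x : ℝ => (Real.sqrt (1 - x ^ 2))⁻¹) volume 0 1 := by
    have hg0 : IntervalIntegrable (fun y : ℝ => y ^ (-(1/2) : ℝ)) volume 1 0 :=
      intervalIntegrable_rpow' (by norm_num)
    have hg : IntervalIntegrable (fun x : ℝ => (1 - x) ^ (-(1/2) : ℝ)) volume 0 1 := by
      simpa using hg0.comp_sub_left 1
    refine hg.mono_fun meas_aux.aestronglyMeasurable ?_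
    filter_upwards [ae_restrict_mem measurableSet_uIoc] with x hx
    rw [Set.uIoc_of_le (by norm_num : (0:ℝ) ≤ 1)] at hx
    obtain ⟨hx0, hx1⟩ := hx
    have h1x : (0:ℝ) ≤ 1 - x := by linarith
    have hr : (1 - x) ^ (-(1/2) : ℝ) = (Real.sqrt (1 - x))⁻¹ := by
      rw [Real.rpow_neg h1x, Real.sqrt_eq_rpow]
    rw [Real.norm_eq_abs, Real.norm_eq_abs, abs_of_nonneg (by positivity), hr,
      abs_of_nonneg (by positivity)]
    rcases eq_or_lt_of_le hx1 with h | h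
    · subst h; norm_num
    · have h1 : Real.sqrt (1 - x) ≤ Real.sqrt (1 - x ^ 2) := by
        apply Real.sqrt_le_sqrt; nlinarith
      have h2 : 0 < Real.sqrt (1 - x) := Real.sqrt_pos.mpr (by linarith)
      exact inv_anti₀ h2 h1
  have h10 : IntervalIntegrable (fun x : ℝ => (Real.sqrt (1 - x ^ 2))⁻¹) volume (-1) 0 := by
    rw [IntervalIntegrable.iff_comp_neg]
    have he : (fun x : ℝ => (Real.sqrt (1 - (-x) ^ 2))⁻¹)
        = fun x : ℝ => (Real.sqrt (1 - x ^ 2))⁻¹ := by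
      funext x; rw [neg_pow]; norm_num
    rw [show -(-1 : ℝ) = 1 by norm_num, show -(0:ℝ) = 0 by norm_num, he]
    exact h01.symm
  exact h10.trans h01

lemma int_TD {z : ℝ} (hz : 1 < z) (p : Polynomial ℝ) :
    IntervalIntegrable (fun x => p.eval x / ((x - z) * Real.sqrt (1 - x ^ 2)))
      volume (-1) 1 := by
  have hcont : ContinuousOn (fun x : ℝ => p.eval x / (x - z)) (Set.uIcc (-1) 1) := by
    apply ContinuousOn.div (p.continuous.continuousOn)
      ((continuous_id.sub continuous_const).continuousOn)
    intro x hx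
    rw [Set.uIcc_of_le (by norm_num : (-1:ℝ) ≤ 1)] at hx
    intro h
    simp only [Pi.sub_apply, id_eq, sub_eq_zero] at h
    have := hx.2; linarith
  have h := int_sqrt_inv.continuousOn_mul hcont
  have he : (fun x : ℝ => p.eval x / (x - z) * (Real.sqrt (1 - x ^ 2))⁻¹)
      = fun x => p.eval x / ((x - z) * Real.sqrt (1 - x ^ 2)) := by
    funext x
    rw [div_eq_mul_inv, div_eq_mul_inv, mul_inv, mul_assoc]
  rwa [he] at h

lemma int_T (p : Polynomial ℝ) :
    IntervalIntegrable (fun x => p.eval x / Real.sqrt (1 - x ^ 2)) volume (-1) 1 := by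
  have h := int_sqrt_inv.continuousOn_mul (p.continuous.continuousOn
    (s := Set.uIcc (-1) 1))
  have he : (fun x : ℝ => p.eval x * (Real.sqrt (1 - x ^ 2))⁻¹)
      = fun x => p.eval x / Real.sqrt (1 - x ^ 2) := by
    funext x; rw [div_eq_mul_inv]
  rwa [he] at h


lemma J0 : ∫ x in (-1:ℝ)..1, (Real.sqrt (1 - x ^ 2))⁻¹ = π := by
  have h := integral_eq_sub_of_hasDeriv_right_of_le (f := Real.arcsin)
    (f' := fun x : ℝ => (Real.sqrt (1 - x ^ 2))⁻¹) (by norm_num)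
    (Real.continuous_arcsin.continuousOn) ?_ int_sqrt_inv
  · rw [h, Real.arcsin_one, Real.arcsin_neg_one]; ring
  · intro x hx
    have := Real.hasDerivAt_arcsin (ne_of_gt hx.1) (ne_of_lt hx.2)
    rw [one_div] at this
    exact this.hasDerivWithinAt

lemma Jk (k : ℕ) (hk : k ≠ 0) :
    ∫ x in (-1:ℝ)..1, (T ℝ (k:ℤ)).eval x / Real.sqrt (1 - x ^ 2) = 0 := by
  have hkR : (k : ℝ) ≠ 0 := Nat.cast_ne_zero.mpr hk
  have h := integral_eq_sub_of_hasDeriv_right_of_le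
    (f := fun x => -Real.sin (k * Real.arccos x) / k)
    (f' := fun x => (T ℝ (k:ℤ)).eval x / Real.sqrt (1 - x ^ 2)) (by norm_num)
    ?_ ?_ (int_T _)
  · rw [h]
    rw [Real.arccos_one, Real.arccos_neg_one, mul_zero, Real.sin_zero, Real.sin_nat_mul_pi]
    norm_num
  · exact ((Real.continuous_sin.comp
      (continuous_const.mul Real.continuous_arccos)).neg.div_const _).continuousOn
  · intro x hx
    have hQ : (0:ℝ) < 1 - x ^ 2 := by nlinarith [hx.1, hx.2]
    have hR : (0:ℝ) < Real.sqrt (1 - x ^ 2) := Real.sqrt_pos.mpr hQ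
    have ha := Real.hasDerivAt_arccos (ne_of_gt hx.1) (ne_of_lt hx.2)
    have h2 : HasDerivAt (fun y => (k:ℝ) * Real.arccos y)
        ((k:ℝ) * -(1 / Real.sqrt (1 - x ^ 2))) x := ha.const_mul _
    have h3 := ((Real.hasDerivAt_sin ((k:ℝ) * Real.arccos x)).comp x h2).neg.div_const (k:ℝ)
    have hTc : (T ℝ (k:ℤ)).eval x = Real.cos ((k:ℝ) * Real.arccos x) := by
      have := T_real_cos (Real.arccos x) (k:ℤ)
      rw [Real.cos_arccos (by linarith [hx.1]) (by linarith [hx.2])] at this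
      rw [this]; push_cast; ring_nf
    refine h3.hasDerivWithinAt.congr_deriv ?_
    rw [hTc]; field_simp


lemma I0 {z : ℝ} (hz : 1 < z) :
    ∫ x in (-1:ℝ)..1, 1 / ((x - z) * Real.sqrt (1 - x ^ 2))
      = -(π / Real.sqrt (z ^ 2 - 1)) := by
  set s := Real.sqrt (z ^ 2 - 1) with hs_def
  have hs0 : (0:ℝ) < z ^ 2 - 1 := by nlinarith
  have hs : 0 < s := Real.sqrt_pos.mpr hs0
  have hs2 : s ^ 2 = z ^ 2 - 1 := Real.sq_sqrt hs0.le
  set w := z - s with hw_def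
  have hw0 : 0 < w := by nlinarith [hs2, hs, sq_nonneg (z - s)]
  have hw1 : w < 1 := by nlinarith [hs2, hs, sq_nonneg (z - 1 - s)]
  have hww : w ^ 2 = 2 * z * w - 1 := by rw [hw_def]; linear_combination hs2
  have hdpos : ∀ x ∈ Set.Icc (-1:ℝ) 1, (0:ℝ) < 1 - w * x := by
    intro x hx; nlinarith [hx.1, hx.2]
  set H := fun x : ℝ => (Real.arccos x
      + 2 * Real.arctan (w * Real.sqrt (1 - x ^ 2) / (1 - w * x))) / s with hH
  have hcont : ContinuousOn H (Set.Icc (-1:ℝ) 1) := by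
    apply ContinuousOn.div_const
    apply ContinuousOn.add Real.continuous_arccos.continuousOn
    apply ContinuousOn.mul continuousOn_const
    apply Real.continuous_arctan.comp_continuousOn
    apply ContinuousOn.div
    · exact (continuous_const.mul (Real.continuous_sqrt.comp (by continuity))).continuousOn
    · exact (continuous_const.sub (continuous_const.mul continuous_id)).continuousOn
    · intro x hx; exact (hdpos x hx).ne'
  have hint : IntervalIntegrable (fun x => 1 / ((x - z) * Real.sqrt (1 - x ^ 2)))
      volume (-1) 1 := by simpa using int_TD hz (1 : Polynomial ℝ)
  have hderiv : ∀ x ∈ Set.Ioo (-1:ℝ) 1,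
      HasDerivWithinAt H (1 / ((x - z) * Real.sqrt (1 - x ^ 2))) (Set.Ioi x) x := by
    intro x hx
    have hQ : (0:ℝ) < 1 - x ^ 2 := by nlinarith [hx.1, hx.2]
    have hR : 0 < Real.sqrt (1 - x ^ 2) := Real.sqrt_pos.mpr hQ
    set R := Real.sqrt (1 - x ^ 2) with hRdef
    have hR2 : R ^ 2 = 1 - x ^ 2 := Real.sq_sqrt hQ.le
    have hd : (0:ℝ) < 1 - w * x := hdpos x (Set.mem_Icc.mpr ⟨hx.1.le, hx.2.le⟩)
    have hxz : x - z ≠ 0 := by have := hx.2; intro hc; nlinarith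
    have hq : HasDerivAt (fun y : ℝ => 1 - y ^ 2) (-(2 * x)) x := by
      simpa using (hasDerivAt_pow 2 x).const_sub 1
    have hr : HasDerivAt (fun y : ℝ => Real.sqrt (1 - y ^ 2)) (-(2 * x) / (2 * R)) x :=
      hq.sqrt (ne_of_gt hQ)
    have hnum : HasDerivAt (fun y : ℝ => w * Real.sqrt (1 - y ^ 2))
        (w * (-(2 * x) / (2 * R))) x := hr.const_mul w
    have hden : HasDerivAt (fun y : ℝ => 1 - w * y) (-(w * 1)) x :=
      ((hasDerivAt_id x).const_mul w).const_sub 1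
    have hu : HasDerivAt (fun y : ℝ => w * Real.sqrt (1 - y ^ 2) / (1 - w * y))
        ((w * (-(2 * x) / (2 * R)) * (1 - w * x) - w * R * -(w * 1)) / (1 - w * x) ^ 2) x :=
      hnum.div hden (ne_of_gt hd)
    have hat := (Real.hasDerivAt_arctan (w * R / (1 - w * x))).comp x hu
    have harc := Real.hasDerivAt_arccos (ne_of_gt hx.1) (ne_of_lt hx.2)
    have hH' := (harc.add (hat.const_mul 2)).div_const s
    refine hH'.hasDerivWithinAt.congr_deriv ?_
    symm
    rw [← hRdef]
    have e1 : (1 - w*x)^2 + (w*R)^2 = 2*w*(z - x) := by linear_combination w^2*hR2 + hww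
    have hA : 1 + (w * R / (1 - w * x)) ^ 2 = 2*w*(z - x) / (1 - w*x)^2 := by
      rw [div_pow, one_add_div (by positivity), e1]
    have hzx' : 0 < z - x := by linarith [hx.2]
    have hu' : (w * (-(2 * x) / (2 * R)) * (1 - w * x) - w * R * -(w * 1)) / (1 - w * x) ^ 2
        = w * (w - x) / (R * (1 - w * x) ^ 2) := by
      rw [div_eq_div_iff (by positivity) (by positivity)]
      field_simp
      linear_combination (-(w * (1 - w*x)^2) + (2*w - 2*x*w^2 + x^2*w^3)) * hR2
    have hB : 1 / (2*w*(z - x) / (1 - w*x)^2) * (w * (w - x) / (R * (1 - w * x) ^ 2))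
        = (w - x) / (2 * R * (z - x)) := by
      field_simp
    rw [hA, hu', hB]
    field_simp
    linear_combination (z - x) * hw_def
  have h := integral_eq_sub_of_hasDeriv_right_of_le (by norm_num) hcont hderiv hint
  rw [h, hH]
  simp only []
  norm_num [Real.arccos_one, Real.arccos_neg_one]


lemma cheb_int {z : ℝ} (hz : 1 < z) (k : ℕ) :
    ∫ x in (-1:ℝ)..1, (T ℝ (k:ℤ)).eval x / ((x - z) * Real.sqrt (1 - x ^ 2))
      = -(π * (z - Real.sqrt (z ^ 2 - 1)) ^ k / Real.sqrt (z ^ 2 - 1)) := by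
  set s := Real.sqrt (z ^ 2 - 1) with hs_def
  have hs0 : (0:ℝ) < z ^ 2 - 1 := by nlinarith
  have hs : 0 < s := Real.sqrt_pos.mpr hs0
  have hs2 : s ^ 2 = z ^ 2 - 1 := Real.sq_sqrt hs0.le
  set w := z - s with hw_def
  have hww : w ^ 2 = 2 * z * w - 1 := by rw [hw_def]; linear_combination hs2
  have hint0 : IntervalIntegrable (fun x => 1 / ((x - z) * Real.sqrt (1 - x ^ 2)))
      volume (-1) 1 := by simpa using int_TD hz (1 : Polynomial ℝ)
  suffices h : ∀ j : ℕ,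
      ((∫ x in (-1:ℝ)..1, (T ℝ (j:ℤ)).eval x / ((x - z) * Real.sqrt (1 - x ^ 2)))
        = -(π * w ^ j / s)) ∧
      ((∫ x in (-1:ℝ)..1, (T ℝ ((j+1:ℕ):ℤ)).eval x / ((x - z) * Real.sqrt (1 - x ^ 2)))
        = -(π * w ^ (j+1) / s)) by
    exact (h k).1
  intro j
  induction j with
  | zero =>
    constructor
    · have : ∀ x : ℝ, (T ℝ ((0:ℕ):ℤ)).eval x = 1 := by
        intro x; norm_num [Polynomial.Chebyshev.T_zero]
      simp only [this, pow_zero, mul_one]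
      exact I0 hz
    · have hT1 : ∀ x : ℝ, (T ℝ ((0+1:ℕ):ℤ)).eval x = x := by
        intro x; norm_num [Polynomial.Chebyshev.T_one]
      have heq : Set.EqOn
          (fun x : ℝ => (T ℝ ((0+1:ℕ):ℤ)).eval x / ((x - z) * Real.sqrt (1 - x ^ 2)))
          (fun x : ℝ => (Real.sqrt (1 - x ^ 2))⁻¹
            + z * (1 / ((x - z) * Real.sqrt (1 - x ^ 2))))
          (Set.uIcc (-1:ℝ) 1) := by
        intro x hx
        rw [Set.uIcc_of_le (by norm_num : (-1:ℝ) ≤ 1)] at hx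
        have hxz : x - z ≠ 0 := by have := hx.2; intro hc; nlinarith
        simp only [hT1]
        rcases eq_or_ne (Real.sqrt (1 - x ^ 2)) 0 with h | h
        · simp [h]
        · field_simp
          ring
      rw [intervalIntegral.integral_congr heq,
        intervalIntegral.integral_add int_sqrt_inv (hint0.const_mul z),
        intervalIntegral.integral_const_mul, J0, I0 hz]
      rw [← hs_def]
      field_simp
      ring
  | succ n ih =>
    refine ⟨ih.2, ?_⟩
    have hcast : ((n+1+1:ℕ):ℤ) = (n:ℤ) + 2 := by push_cast; ring
    have hcast1 : ((n+1:ℕ):ℤ) = (n:ℤ) + 1 := by push_cast; ring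
    have hT := Polynomial.Chebyshev.T_add_two ℝ (n:ℤ)
    have hTe : ∀ x : ℝ, (T ℝ ((n:ℤ)+2)).eval x
        = 2 * x * (T ℝ ((n:ℤ)+1)).eval x - (T ℝ (n:ℤ)).eval x := by
      intro x
      rw [hT]
      simp [Polynomial.eval_mul, Polynomial.eval_sub]
    have heq : Set.EqOn
        (fun x : ℝ => (T ℝ ((n+1+1:ℕ):ℤ)).eval x / ((x - z) * Real.sqrt (1 - x ^ 2)))
        (fun x : ℝ => 2 * ((T ℝ ((n+1:ℕ):ℤ)).eval x / Real.sqrt (1 - x ^ 2))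
          + (2*z) * ((T ℝ ((n+1:ℕ):ℤ)).eval x / ((x - z) * Real.sqrt (1 - x ^ 2)))
          - (T ℝ (n:ℤ)).eval x / ((x - z) * Real.sqrt (1 - x ^ 2)))
        (Set.uIcc (-1:ℝ) 1) := by
      intro x hx
      rw [Set.uIcc_of_le (by norm_num : (-1:ℝ) ≤ 1)] at hx
      have hxz : x - z ≠ 0 := by have := hx.2; intro hc; nlinarith
      simp only [hcast, hcast1, hTe]
      rcases eq_or_ne (Real.sqrt (1 - x ^ 2)) 0 with h | h
      · simp [h]
      · field_simp
        ring
    rw [intervalIntegral.integral_congr heq,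
      intervalIntegral.integral_sub
        (((int_T (T ℝ ((n+1:ℕ):ℤ))).const_mul 2).add
          ((int_TD hz (T ℝ ((n+1:ℕ):ℤ))).const_mul (2*z)))
        (int_TD hz (T ℝ (n:ℤ))),
      intervalIntegral.integral_add
        ((int_T (T ℝ ((n+1:ℕ):ℤ))).const_mul 2)
        ((int_TD hz (T ℝ ((n+1:ℕ):ℤ))).const_mul (2*z)),
      intervalIntegral.integral_const_mul, intervalIntegral.integral_const_mul,
      Jk (n+1) (Nat.succ_ne_zero n), ih.1, ih.2]
    have hpow : w ^ (n+1+1) = 2 * z * w ^ (n+1) - w ^ n := by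
      have : w ^ (n+1+1) = w ^ n * w ^ 2 := by ring
      rw [this, hww]; ring
    rw [hpow]
    field_simp
    ring

theorem stmt13 (z : ℝ) (hz : 1 < z) (n m : ℕ) :
    ∫ x in (-1 : ℝ)..1,
        (Polynomial.Chebyshev.T ℝ (n : ℤ)).eval x *
          (Polynomial.Chebyshev.T ℝ (m : ℤ)).eval x /
            ((x - z) * Real.sqrt (1 - x ^ 2)) =
      -(Real.pi *
          ((z - Real.sqrt (z ^ 2 - 1)) ^ (n + m) +
            (z - Real.sqrt (z ^ 2 - 1)) ^ ((n : ℤ) - (m : ℤ)).natAbs) /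
          (2 * Real.sqrt (z ^ 2 - 1))) := by
  set d := ((n : ℤ) - (m : ℤ)).natAbs with hd_def
  have hTd : T ℝ (d:ℤ) = T ℝ ((n:ℤ) - (m:ℤ)) := by
    rcases Int.natAbs_eq ((n:ℤ) - (m:ℤ)) with h | h
    · rw [hd_def, ← h]
    · rw [hd_def, show ((((n:ℤ)-(m:ℤ)).natAbs : ℤ)) = -((n:ℤ)-(m:ℤ)) by omega,
        Polynomial.Chebyshev.T_neg]
  have hmul := Polynomial.Chebyshev.T_mul_T ℝ (n:ℤ) (m:ℤ)
  have hme : ∀ x : ℝ, 2 * ((T ℝ (n:ℤ)).eval x * (T ℝ (m:ℤ)).eval x)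
      = (T ℝ ((n:ℤ)+(m:ℤ))).eval x + (T ℝ (d:ℤ)).eval x := by
    intro x
    rw [hTd]
    have := congrArg (Polynomial.eval x) hmul
    simpa [Polynomial.eval_mul, Polynomial.eval_add, mul_assoc] using this
  have heq : Set.EqOn
      (fun x : ℝ => (T ℝ (n:ℤ)).eval x * (T ℝ (m:ℤ)).eval x
        / ((x - z) * Real.sqrt (1 - x ^ 2)))
      (fun x : ℝ => (1/2) * ((T ℝ (((n+m:ℕ)):ℤ)).eval x / ((x - z) * Real.sqrt (1 - x ^ 2)))
        + (1/2) * ((T ℝ ((d:ℕ):ℤ)).eval x / ((x - z) * Real.sqrt (1 - x ^ 2))))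
      (Set.uIcc (-1:ℝ) 1) := by
    intro x hx
    have hcast : (((n+m:ℕ)):ℤ) = (n:ℤ) + (m:ℤ) := by push_cast; ring
    simp only [hcast]
    rcases eq_or_ne ((x - z) * Real.sqrt (1 - x ^ 2)) 0 with h | h
    · simp [h]
    · rw [mul_div_assoc', mul_div_assoc', ← add_div, div_eq_div_iff h h]
      linear_combination (((x - z) * Real.sqrt (1 - x ^ 2)) / 2) * hme x
  rw [intervalIntegral.integral_congr heq,
    intervalIntegral.integral_add
      ((int_TD hz (T ℝ (((n+m:ℕ)):ℤ))).const_mul (1/2))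
      ((int_TD hz (T ℝ ((d:ℕ):ℤ))).const_mul (1/2)),
    intervalIntegral.integral_const_mul, intervalIntegral.integral_const_mul,
    cheb_int hz (n+m), cheb_int hz d]
  ring
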